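/- Let (V,E) be a temporal graph over timestamps {0,…,T} and let α ∈ [0,1]. Every directed path p in the transformed graph G' from a replica (u,t_i) to a replica (v,t_j) whose first and last edges are snapshot edges projects (by deleting the waiting edges and reading each snapshot edge ((x,t),(y,t)) as the timestamped edge (x,y,t)) to a valid temporal path p' from u to v in (V,E), and the length of p in G' equals the cost of p', i.e. ℓ(p) = L(p'). -/

import Mathlib

open scoped ENNReal BigOperators

variable {V : Type*}

/-- `p` is a temporal path from `u` to `v` with edges in `E`:
a nonempty list of timestamped edges, consecutive in space and
with nondecreasing timestamps. -/
def IsTempPath (E : Set (V × V × ℕ)) (u v : V) (p : List (V × V × ℕ)) : Prop :=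
  p ≠ [] ∧ (∀ e ∈ p, e ∈ E) ∧
    List.Chain' (fun e f : V × V × ℕ => e.2.1 = f.1 ∧ e.2.2 ≤ f.2.2) p ∧
    p.head?.map Prod.fst = some u ∧
    p.getLast?.map (fun e => e.2.1) = some v

/-- Timestamp of the first edge of a temporal path. -/
def firstTime (p : List (V × V × ℕ)) : ℕ := (p.head?.map (fun e => e.2.2)).getD 0

/-- Timestamp of the last edge of a temporal path. -/
def lastTime (p : List (V × V × ℕ)) : ℕ := (p.getLast?.map (fun e => e.2.2)).getD 0

/-- Cost `L_α(p) = α·(number of edges) + (1-α)·(t_n - t_0)` of a temporal path. -/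
noncomputable def costL (α : ℝ) (p : List (V × V × ℕ)) : ℝ :=
  α * p.length + (1 - α) * ((lastTime p : ℝ) - (firstTime p : ℝ))

/-- Shortest-fastest-path distance: infimum of `L_α` over temporal paths from `u` to `v`,
taken in `ℝ≥0∞` (so `∞` if no temporal path exists). -/
noncomputable def sfpDist (α : ℝ) (E : Set (V × V × ℕ)) (u v : V) : ℝ≥0∞ :=
  sInf {c : ℝ≥0∞ | ∃ p, IsTempPath E u v p ∧ c = ENNReal.ofReal (costL α p)}

/-- Adjacency of the transformed graph `G'` on `V × {0,…,T}`:
waiting edges `(v,t) → (v,t+1)` and snapshot edges `(u,t) → (v,t)` for `(u,v,t) ∈ E`. -/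
def TransAdj (E : Set (V × V × ℕ)) (T : ℕ) : V × ℕ → V × ℕ → Prop := fun a b =>
  (a.1 = b.1 ∧ b.2 = a.2 + 1 ∧ b.2 ≤ T) ∨ ((a.1, b.1, a.2) ∈ E ∧ b.2 = a.2)

/-- Weight of an edge of the transformed graph: `α` for snapshot edges (same timestamp),
`1 - α` for waiting edges. -/
noncomputable def transWeight (α : ℝ) (a b : V × ℕ) : ℝ := if a.2 = b.2 then α else 1 - α

/-- Length `ℓ` of a path in the transformed graph (given as its list of visited vertices):
the sum of the weights of its edges. -/
noncomputable def transLen (α : ℝ) (p : List (V × ℕ)) : ℝ :=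
  ((p.zip p.tail).map fun ab => transWeight α ab.1 ab.2).sum

/-- `p` is a directed path in the transformed graph from `x` to `y`,
given as its (nonempty) list of visited vertices. -/
def IsTransPath (E : Set (V × V × ℕ)) (T : ℕ) (x y : V × ℕ) (p : List (V × ℕ)) : Prop :=
  p ≠ [] ∧ List.Chain' (TransAdj E T) p ∧ p.head? = some x ∧ p.getLast? = some y

/-- Projection of a transformed-graph path to a list of timestamped edges:
delete the waiting edges and read each snapshot edge `((x,t),(y,t))` as `(x,y,t)`. -/
def project (p : List (V × ℕ)) : List (V × V × ℕ) :=
  ((p.zip p.tail).filter fun ab => ab.1.2 == ab.2.2).map fun ab => (ab.1.1, ab.2.1, ab.1.2)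

/-- Shortest-path distance in the transformed graph, in `ℝ≥0∞`. -/
noncomputable def transDist (E : Set (V × V × ℕ)) (T : ℕ) (α : ℝ) (x y : V × ℕ) : ℝ≥0∞ :=
  sInf {c : ℝ≥0∞ | ∃ p, IsTransPath E T x y p ∧ c = ENNReal.ofReal (transLen α p)}

/-- Shortest-path distance (number of edges) in a static graph with adjacency `A`,
in `ℝ≥0∞`: the infimum of the number of edges over (nonempty) walks from `u` to `v`. -/
noncomputable def staticDist (A : V → V → Prop) (u v : V) : ℝ≥0∞ :=
  sInf {c : ℝ≥0∞ | ∃ p : List (V × V), p ≠ [] ∧ (∀ e ∈ p, A e.1 e.2) ∧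
    List.Chain' (fun e f : V × V => e.2 = f.1) p ∧
    p.head?.map Prod.fst = some u ∧ p.getLast?.map Prod.snd = some v ∧
    c = (p.length : ℝ≥0∞)}

/-- Per-pair temporal inefficiency `[(1 - α/d(v,u)) + (1 - α/d(u,v))]/2`,
with the convention `α/∞ = 0` (via `ENNReal.toReal`). -/
noncomputable def perPairIneff (α : ℝ) (E : Set (V × V × ℕ)) (u v : V) : ℝ :=
  ((1 - α / (sfpDist α E v u).toReal) + (1 - α / (sfpDist α E u v).toReal)) / 2

/-- Temporal network inefficiency: the sum of the per-pair inefficiency over unordered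
pairs of distinct vertices (the summand is symmetric, so we sum over ordered pairs and
halve). -/
noncomputable def tempIneff (α : ℝ) (E : Set (V × V × ℕ)) [Fintype V] [DecidableEq V] : ℝ :=
  (∑ q ∈ Finset.univ.offDiag, perPairIneff α E (Prod.fst q) (Prod.snd q)) / 2

/-- Temporal edges of the subgraph induced by `S`. -/
def inducedE (E : Set (V × V × ℕ)) (S : Set V) : Set (V × V × ℕ) :=
  {e ∈ E | e.1 ∈ S ∧ e.2.1 ∈ S}

/-- Temporal network inefficiency of the temporal subgraph induced by a finite set `S`. -/
noncomputable def tempIneffOn (α : ℝ) (E : Set (V × V × ℕ)) [DecidableEq V]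
    (S : Finset V) : ℝ :=
  (∑ q ∈ S.offDiag, perPairIneff α (inducedE E ↑S) (Prod.fst q) (Prod.snd q)) / 2

/-- Static network inefficiency `Σ_{u ≠ v ∈ S} (1 - 1/d_{G[S]}(u,v))` (unordered pairs,
with `1/∞ = 0`) of the subgraph induced by `S` in the static graph with adjacency `A`. -/
noncomputable def staticIneffOn (A : V → V → Prop) [DecidableEq V] (S : Finset V) : ℝ :=
  (∑ q ∈ S.offDiag,
    (1 - 1 / (staticDist (fun x y => A x y ∧ x ∈ S ∧ y ∈ S)
      (Prod.fst q) (Prod.snd q)).toReal)) / 2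


namespace Stmt0Aux

variable {V : Type*}

def snapB (e : (V × ℕ) × (V × ℕ)) : Bool := e.1.2 == e.2.2

def rd (e : (V × ℕ) × (V × ℕ)) : V × V × ℕ := (e.1.1, e.2.1, e.1.2)

def projE (L : List ((V × ℕ) × (V × ℕ))) : List (V × V × ℕ) :=
  (L.filter snapB).map rd

lemma project_eq (p : List (V × ℕ)) : project p = projE (p.zip p.tail) := rfl

lemma projE_cons (e : (V × ℕ) × (V × ℕ)) (L : List ((V × ℕ) × (V × ℕ))) :
    projE (e :: L) = if snapB e then rd e :: projE L else projE L := by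
  simp only [projE, List.filter_cons]
  split <;> simp

lemma trans_snap {E : Set (V × V × ℕ)} {T : ℕ} {a b : V × ℕ}
    (h : TransAdj E T a b) (hs : a.2 = b.2) : (a.1, b.1, a.2) ∈ E := by
  rcases h with ⟨_, h2, _⟩ | ⟨h1, _⟩
  · omega
  · exact h1

lemma trans_wait {E : Set (V × V × ℕ)} {T : ℕ} {a b : V × ℕ}
    (h : TransAdj E T a b) (hs : a.2 ≠ b.2) : a.1 = b.1 ∧ b.2 = a.2 + 1 := by
  rcases h with ⟨h1, h2, _⟩ | ⟨_, h2⟩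
  · exact ⟨h1, h2⟩
  · omega

lemma zip_rel {R : (V × ℕ) → (V × ℕ) → Prop} :
    ∀ {p : List (V × ℕ)}, List.Chain' R p → ∀ e ∈ p.zip p.tail, R e.1 e.2
  | [], _, e, he => by simp at he
  | [a], _, e, he => by simp at he
  | a :: b :: t, h, e, he => by
      simp only [List.Chain', List.isChain_cons_cons] at h
      simp only [List.tail_cons, List.zip_cons_cons] at he
      rcases List.mem_cons.1 he with rfl | he
      · exact h.1
      · exact zip_rel h.2 e he

lemma zip_chain : ∀ (p : List (V × ℕ)),
    List.Chain' (fun e f : (V × ℕ) × (V × ℕ) => e.2 = f.1) (p.zip p.tail)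
  | [] => by simp [List.Chain']
  | [a] => by simp [List.Chain']
  | [a, b] => by simp [List.Chain']
  | a :: b :: c :: t => by
      have ih := zip_chain (b :: c :: t)
      simp only [List.tail_cons, List.zip_cons_cons] at ih ⊢
      exact List.IsChain.cons_cons rfl ih

lemma zip_head : ∀ (p : List (V × ℕ)) (e : (V × ℕ) × (V × ℕ)),
    (p.zip p.tail).head? = some e → p.head? = some e.1
  | [], e, h => by simp at h
  | [a], e, h => by simp at h
  | a :: b :: t, e, h => by
      simp only [List.tail_cons, List.zip_cons_cons, List.head?_cons,
        Option.some.injEq] at h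
      subst h
      rfl

lemma zip_last : ∀ (p : List (V × ℕ)) (e : (V × ℕ) × (V × ℕ)),
    (p.zip p.tail).getLast? = some e → p.getLast? = some e.2
  | [], e, h => by simp at h
  | [a], e, h => by simp at h
  | [a, b], e, h => by
      simp only [List.tail_cons, List.zip_cons_cons, List.zip_nil_right] at h
      simp only [List.getLast?_singleton, Option.some.injEq] at h
      subst h
      rfl
  | a :: b :: c :: t, e, h => by
      simp only [List.tail_cons, List.zip_cons_cons] at h
      rw [List.getLast?_cons_cons] at h
      have := zip_last (b :: c :: t) e (by simpa using h)
      rw [List.getLast?_cons_cons]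
      exact this

lemma proj_head' {L : List ((V × ℕ) × (V × ℕ))} {e : (V × ℕ) × (V × ℕ)}
    (h : L.head? = some e) (hs : snapB e = true) : (projE L).head? = some (rd e) := by
  cases L with
  | nil => simp at h
  | cons f L' =>
      simp only [List.head?_cons, Option.some.injEq] at h
      subst h
      rw [projE_cons, if_pos hs]
      rfl

lemma proj_last : ∀ (L : List ((V × ℕ) × (V × ℕ))) (hne : L ≠ []),
    snapB (L.getLast hne) = true → (projE L).getLast? = some (rd (L.getLast hne))
  | [e], _, hs => by
      simp only [List.getLast_singleton] at hs ⊢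
      rw [projE_cons, if_pos hs]
      rfl
  | e :: f :: L'', _, hs => by
      have hH : (f :: L'') ≠ [] := by simp
      rw [List.getLast_cons hH] at hs ⊢
      have ih := proj_last (f :: L'') hH hs
      rw [projE_cons]
      split
      · have hne2 : projE (f :: L'') ≠ [] := by
          intro h
          rw [h] at ih
          simp at ih
        obtain ⟨y, ys, hys⟩ := List.exists_cons_of_ne_nil hne2
        rw [hys] at ih ⊢
        rw [List.getLast?_cons_cons]
        exact ih
      · exact ih

lemma master {E : Set (V × V × ℕ)} {T : ℕ} :
    ∀ (L : List ((V × ℕ) × (V × ℕ))) (hne : L ≠ []),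
      (∀ e ∈ L, TransAdj E T e.1 e.2) →
      List.Chain' (fun e f : (V × ℕ) × (V × ℕ) => e.2 = f.1) L →
      ((L.head hne).1.2 + L.countP (fun e => !snapB e) = (L.getLast hne).2.2
      ∧ (∀ e ∈ projE L, e ∈ E)
      ∧ List.Chain' (fun e f : V × V × ℕ => e.2.1 = f.1 ∧ e.2.2 ≤ f.2.2) (projE L)
      ∧ (∀ e, (projE L).head? = some e → e.1 = (L.head hne).1.1 ∧ (L.head hne).1.2 ≤ e.2.2))
  | [e], hne, hmem, _ => by
      have hadj := hmem e (by simp)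
      by_cases hs : e.1.2 = e.2.2
      · have hsb : snapB e = true := by simp [snapB, hs]
        refine ⟨?_, ?_, ?_, ?_⟩
        · simp [List.countP_cons, hsb, hs]
        · intro x hx
          rw [projE_cons, if_pos hsb] at hx
          simp only [projE, List.filter_nil, List.map_nil, List.mem_singleton] at hx
          subst hx
          exact trans_snap hadj hs
        · rw [projE_cons, if_pos hsb]
          simp [projE, List.Chain']
        · intro x hx
          rw [projE_cons, if_pos hsb] at hx
          simp only [projE, List.filter_nil, List.map_nil, List.head?_cons,
            Option.some.injEq] at hx
          subst hx
          exact ⟨rfl, le_refl _⟩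
      · have hsb : snapB e = false := by simp [snapB, hs]
        have hw := trans_wait hadj hs
        refine ⟨?_, ?_, ?_, ?_⟩
        · simp only [List.head_cons, List.getLast_singleton, List.countP_cons, hsb]
          simp
          omega
        · intro x hx
          rw [projE_cons, if_neg (by simp [hsb])] at hx
          simp [projE] at hx
        · rw [projE_cons, if_neg (by simp [hsb])]
          simp [projE, List.Chain']
        · intro x hx
          rw [projE_cons, if_neg (by simp [hsb])] at hx
          simp [projE] at hx
  | e :: f :: L'', hne, hmem, hch => by
      have hH : (f :: L'') ≠ [] := by simp
      simp only [List.Chain', List.isChain_cons_cons] at hch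
      have hconn : e.2 = f.1 := hch.1
      obtain ⟨ih1, ih2, ih3, ih4⟩ :=
        master (f :: L'') hH (fun x hx => hmem x (List.mem_cons_of_mem _ hx)) hch.2
      have hadj := hmem e (by simp)
      have hheads : (e :: f :: L'').head hne = e := rfl
      have hlasts : (e :: f :: L'').getLast hne = (f :: L'').getLast hH :=
        List.getLast_cons hH
      have hHhead : (f :: L'').head hH = f := rfl
      rw [hHhead] at ih1 ih4
      by_cases hs : e.1.2 = e.2.2
      · have hsb : snapB e = true := by simp [snapB, hs]
        refine ⟨?_, ?_, ?_, ?_⟩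
        · rw [hheads, hlasts, List.countP_cons]
          have h2 : e.1.2 = f.1.2 := by rw [hs, hconn]
          simp only [hsb, Bool.not_true, Bool.false_eq_true, if_false]
          omega
        · intro x hx
          rw [projE_cons, if_pos hsb] at hx
          rcases List.mem_cons.1 hx with rfl | hx
          · exact trans_snap hadj hs
          · exact ih2 x hx
        · rw [projE_cons, if_pos hsb]
          simp only [List.Chain']
          rw [List.isChain_cons]
          refine ⟨?_, ih3⟩
          intro y hy
          obtain ⟨hy1, hy2⟩ := ih4 y hy
          constructor
          · show e.2.1 = y.1
            rw [hy1, ← hconn]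
          · show e.1.2 ≤ y.2.2
            calc e.1.2 = f.1.2 := by rw [hs, hconn]
            _ ≤ y.2.2 := hy2
        · intro x hx
          rw [projE_cons, if_pos hsb, List.head?_cons, Option.some.injEq] at hx
          subst hx
          exact ⟨rfl, le_refl _⟩
      · have hsb : snapB e = false := by simp [snapB, hs]
        have hw := trans_wait hadj hs
        have hpe : projE (e :: f :: L'') = projE (f :: L'') := by
          rw [projE_cons, if_neg (by simp [hsb])]
        refine ⟨?_, ?_, ?_, ?_⟩
        · rw [hheads, hlasts, List.countP_cons]
          have h2 : e.2.2 = f.1.2 := by rw [hconn]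
          have h3 := hw.2
          simp [hsb]
          omega
        · rw [hpe]; exact ih2
        · rw [hpe]; exact ih3
        · rw [hpe, hheads]
          intro x hx
          obtain ⟨hy1, hy2⟩ := ih4 x hx
          refine ⟨?_, ?_⟩
          · rw [hy1, ← hconn, hw.1]
          · have : e.2.2 = f.1.2 := by rw [hconn]
            omega

lemma weight_sum (α : ℝ) : ∀ (L : List ((V × ℕ) × (V × ℕ))),
    (L.map fun ab => transWeight α ab.1 ab.2).sum
      = α * L.countP snapB + (1 - α) * L.countP (fun e => !snapB e)
  | [] => by simp
  | e :: L => by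
      have ih := weight_sum α L
      simp only [List.map_cons, List.sum_cons, List.countP_cons, ih]
      by_cases hs : e.1.2 = e.2.2
      · have hsb : snapB e = true := by simp [snapB, hs]
        simp only [transWeight, if_pos hs, hsb, Bool.not_true]
        push_cast
        ring
      · have hsb : snapB e = false := by simp [snapB, hs]
        simp only [transWeight, if_neg hs, hsb, Bool.not_false]
        push_cast
        ring

lemma projE_length (L : List ((V × ℕ) × (V × ℕ))) :
    (projE L).length = L.countP snapB := by
  simp only [projE, List.length_map]
  exact (List.countP_eq_length_filter).symm

end Stmt0Aux

/-- every directed path in the transformed graph `G'` from a replica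
`(u,t_i)` to a replica `(v,t_j)` whose first and last edges are snapshot edges projects
to a valid temporal path from `u` to `v`, of cost equal to the length of the original
path. -/
theorem stmt0 (T : ℕ) (E : Set (V × V × ℕ)) (α : ℝ)
    (hsym : ∀ u v t, (u, v, t) ∈ E ↔ (v, u, t) ∈ E)
    (hT : ∀ e ∈ E, e.2.2 ≤ T) (hα0 : 0 ≤ α) (hα1 : α ≤ 1)
    (u v : V) (ti tj : ℕ) (hti : ti ≤ T) (htj : tj ≤ T)
    (p : List (V × ℕ)) (hp : IsTransPath E T (u, ti) (v, tj) p)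
    (hfirst : ∃ e, (p.zip p.tail).head? = some e ∧ e.1.2 = e.2.2)
    (hlast : ∃ e, (p.zip p.tail).getLast? = some e ∧ e.1.2 = e.2.2) :
    IsTempPath E u v (project p) ∧ transLen α p = costL α (project p) := by
  classical
  open Stmt0Aux in
  obtain ⟨hpne, hchain, hhead, hlastv⟩ := hp
  obtain ⟨ef, hef, hefs⟩ := hfirst
  obtain ⟨el, hel, hels⟩ := hlast
  set L := p.zip p.tail with hLdef
  have hLne : L ≠ [] := by
    intro h
    rw [h] at hef
    simp at hef
  have hmem : ∀ e ∈ L, TransAdj E T e.1 e.2 := fun e he => zip_rel hchain e he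
  have hch := zip_chain p
  obtain ⟨htimes, hmemE, hchE, -⟩ := master (E := E) (T := T) L hLne hmem hch
  have hefhead : L.head hLne = ef := by
    have := List.head?_eq_head hLne
    rw [hef] at this
    exact Option.some.inj this.symm
  have hellast : L.getLast hLne = el := by
    have := List.getLast?_eq_getLast hLne
    rw [hel] at this
    exact Option.some.inj this.symm
  have hef1 : ef.1 = (u, ti) := by
    have := zip_head p ef hef
    rw [hhead] at this
    exact (Option.some.inj this).symm
  have hel2 : el.2 = (v, tj) := by
    have := zip_last p el hel
    rw [hlastv] at this
    exact (Option.some.inj this).symm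
  have hefsb : snapB ef = true := by simp [snapB, hefs]
  have helsb : snapB el = true := by simp [snapB, hels]
  have hproj : project p = projE L := project_eq p
  have hprojhead : (projE L).head? = some (rd ef) := proj_head' hef hefsb
  have hprojlast : (projE L).getLast? = some (rd el) := by
    have := proj_last L hLne (by rw [hellast]; exact helsb)
    rw [hellast] at this
    exact this
  have hprojne : projE L ≠ [] := by
    intro h
    rw [h] at hprojhead
    simp at hprojhead
  have hft : firstTime (project p) = ti := by
    rw [hproj, firstTime, hprojhead]
    simp only [Option.map_some, Option.getD_some]
    show ef.1.2 = ti
    rw [hef1]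
  have hlt : lastTime (project p) = tj := by
    rw [hproj, lastTime, hprojlast]
    simp only [Option.map_some, Option.getD_some]
    show el.1.2 = tj
    rw [hels, hel2]
  have htij : ti + L.countP (fun e => !snapB e) = tj := by
    rw [hefhead, hellast, hef1, hel2] at htimes
    exact htimes
  constructor
  · refine ⟨by rw [hproj]; exact hprojne, ?_, ?_, ?_, ?_⟩
    · rw [hproj]; exact hmemE
    · rw [hproj]; exact hchE
    · rw [hproj, hprojhead]
      simp only [Option.map_some, Option.some.injEq]
      show ef.1.1 = u
      rw [hef1]
    · rw [hproj, hprojlast]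
      simp only [Option.map_some, Option.some.injEq]
      show el.2.1 = v
      rw [hel2]
  · have hws := weight_sum α L
    have hlen : ((project p).length : ℝ) = (L.countP snapB : ℝ) := by
      rw [hproj, projE_length]
    rw [costL, hft, hlt, hlen]
    have hcast : (tj : ℝ) - (ti : ℝ) = (L.countP (fun e => !snapB e) : ℝ) := by
      have := htij
      push_cast [← this]
      ring
    rw [hcast]
    exact hws
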